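/- For every d > 0 and every K > K_m, the cubic polynomial P(t) = 2t³ − K·t² + 2t + d has exactly three real roots f₁ < f₂ < f₃, and they satisfy −d/2 < f₁ < 0 < f₂ < ℓ < f₃ < K/2. Moreover, as K → +∞ one has the asymptotics f₁·√(K/d) → −1, f₂·√(K/d) → 1, and K·(f₃ − K/2) → −2. -/

import Mathlib

set_option maxHeartbeats 2000000

open Filter

theorem cubic_roots (d l K : ℝ) (hd : 0 < d) (hl : 0 < l) (hl3 : l ^ 3 - l - d = 0)
    (hK : 3 * l + 1 / l < K) :
    ∃ p : ℝ × ℝ × ℝ,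
      -d/2 < p.1 ∧ p.1 < 0 ∧ 0 < p.2.1 ∧ p.2.1 < l ∧ l < p.2.2 ∧ p.2.2 < K/2 ∧
      ∀ t : ℝ, 2 * t ^ 3 - K * t ^ 2 + 2 * t + d = 2*(t - p.1)*(t - p.2.1)*(t - p.2.2) := by
  have hl' : 0 < 1/l := by positivity
  have hK0 : 0 < K := by nlinarith
  set P : ℝ → ℝ := fun t => 2 * t ^ 3 - K * t ^ 2 + 2 * t + d with hP
  have hcont : Continuous P := by fun_prop
  have hPd : P (-(d/2)) < 0 := by simp only [hP]; nlinarith [pow_pos hd 3, mul_pos hK0 (mul_pos hd hd)]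
  have hP0 : P 0 = d := by simp [hP]
  have hPl : P l < 0 := by
    simp only [hP]
    have h1 : (3*l + 1/l) * l^2 < K * l ^ 2 := by nlinarith
    have h2 : (3*l+1/l)*l^2 = 3*l^3 + l := by field_simp
    nlinarith
  have hPK : P (K/2) > 0 := by simp only [hP]; nlinarith
  obtain ⟨a, ha, hPa⟩ := intermediate_value_Ioo (by nlinarith : -(d/2) ≤ (0:ℝ))
    hcont.continuousOn (show (0:ℝ) ∈ Set.Ioo (P (-(d/2))) (P 0) from ⟨hPd, by rw [hP0]; exact hd⟩)
  obtain ⟨b, hb, hPb⟩ := intermediate_value_Ioo' (le_of_lt hl)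
    hcont.continuousOn (show (0:ℝ) ∈ Set.Ioo (P l) (P 0) from ⟨hPl, by rw [hP0]; exact hd⟩)
  obtain ⟨c, hc, hPc⟩ := intermediate_value_Ioo (by nlinarith : l ≤ K/2)
    hcont.continuousOn (show (0:ℝ) ∈ Set.Ioo (P l) (P (K/2)) from ⟨hPl, hPK⟩)
  obtain ⟨ha1, ha2⟩ := ha
  obtain ⟨hb1, hb2⟩ := hb
  obtain ⟨hc1, hc2⟩ := hc
  simp only [hP] at hPa hPb hPc
  have hab : a ≠ b := by linarith
  have hbc : b ≠ c := by linarith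
  have hac : a ≠ c := by linarith
  -- quadratic coefficients
  have qa : (2*(a+b+c) - K)*a^2 + (2 - 2*(a*b+a*c+b*c))*a + (d + 2*a*b*c) = 0 := by
    linear_combination hPa
  have qb : (2*(a+b+c) - K)*b^2 + (2 - 2*(a*b+a*c+b*c))*b + (d + 2*a*b*c) = 0 := by
    linear_combination hPb
  have qc : (2*(a+b+c) - K)*c^2 + (2 - 2*(a*b+a*c+b*c))*c + (d + 2*a*b*c) = 0 := by
    linear_combination hPc
  have h1 : (a - b) * ((2*(a+b+c) - K)*(a+b) + (2 - 2*(a*b+a*c+b*c))) = 0 := by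
    linear_combination qa - qb
  have h2 : (b - c) * ((2*(a+b+c) - K)*(b+c) + (2 - 2*(a*b+a*c+b*c))) = 0 := by
    linear_combination qb - qc
  have h1' : (2*(a+b+c) - K)*(a+b) + (2 - 2*(a*b+a*c+b*c)) = 0 :=
    (mul_eq_zero.mp h1).resolve_left (sub_ne_zero.mpr hab)
  have h2' : (2*(a+b+c) - K)*(b+c) + (2 - 2*(a*b+a*c+b*c)) = 0 :=
    (mul_eq_zero.mp h2).resolve_left (sub_ne_zero.mpr hbc)
  have h3 : (a - c) * (2*(a+b+c) - K) = 0 := by linear_combination h1' - h2'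
  have hA : 2*(a+b+c) - K = 0 := (mul_eq_zero.mp h3).resolve_left (sub_ne_zero.mpr hac)
  have hB : 2 - 2*(a*b+a*c+b*c) = 0 := by linear_combination h1' - (a+b) * hA
  have hC : d + 2*a*b*c = 0 := by linear_combination qa - a^2 * hA - a * hB
  exact ⟨(a, b, c), by simpa [neg_div] using ha1, ha2, hb1, hb2, hc1, hc2, fun t => by
    linear_combination t^2 * hA + t * hB + hC⟩

theorem aux_tendsto_f1 (d l : ℝ) (hd : 0 < d) (hl : 0 < l) (hl3 : l ^ 3 - l - d = 0)
    (F : ℝ → ℝ × ℝ × ℝ)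
    (hF : ∀ K : ℝ, 3 * l + 1 / l < K →
      -d / 2 < (F K).1 ∧ (F K).1 < 0 ∧ 0 < (F K).2.1 ∧ (F K).2.1 < l ∧
      l < (F K).2.2 ∧ (F K).2.2 < K / 2 ∧
      ∀ t : ℝ, 2 * t ^ 3 - K * t ^ 2 + 2 * t + d = 2 * (t - (F K).1) * (t - (F K).2.1) * (t - (F K).2.2)) :
    Tendsto (fun K : ℝ => (F K).1 * Real.sqrt (K / d)) atTop (nhds (-1)) := by
  rw [Metric.tendsto_nhds]
  intro ε hε
  set ε' := min ε 1 / 2 with hε'def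
  have hm0 : 0 < min ε 1 := lt_min hε one_pos
  have hε'0 : 0 < ε' := by positivity
  have hε'1 : ε' < 1 := by have : min ε 1 ≤ 1 := min_le_right _ _; rw [hε'def]; linarith
  have hε'ε : ε' < ε := by have h1 : min ε 1 ≤ ε := min_le_left _ _; rw [hε'def]; linarith
  have hs0 : Tendsto (fun K : ℝ => Real.sqrt (d / K)) atTop (nhds 0) := by
    have h1 : Tendsto (fun K : ℝ => d / K) atTop (nhds 0) :=
      tendsto_const_nhds.div_atTop tendsto_id
    have h2 := (Real.continuous_sqrt.tendsto 0).comp h1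
    simpa [Function.comp_def] using h2
  have ev1 : ∀ᶠ K in atTop,
      Real.sqrt (d / K) < min (d * ε' / 20) (min (d / 4) 1) :=
    hs0.eventually (eventually_lt_nhds (by positivity))
  filter_upwards [ev1, eventually_gt_atTop (3 * l + 1 / l), eventually_gt_atTop 0]
    with K hsm hK hK0
  obtain ⟨h1, h2, h3, h4, h5, h6, hfac⟩ := hF K hK
  set a := (F K).1
  set b := (F K).2.1
  set c := (F K).2.2
  set s := Real.sqrt (d / K) with hsdef
  have hs_pos : 0 < s := Real.sqrt_pos.mpr (by positivity)
  have hs2 : s ^ 2 = d / K := Real.sq_sqrt (by positivity)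
  have hKs2 : K * s ^ 2 = d := by rw [hs2]; field_simp
  have hsm1 : s < d * ε' / 20 := lt_of_lt_of_le hsm (min_le_left _ _)
  have hsm3 : s < d / 4 := lt_of_lt_of_le hsm (le_trans (min_le_right _ _) (min_le_left _ _))
  have hsm4 : s < 1 := lt_of_lt_of_le hsm (le_trans (min_le_right _ _) (min_le_right _ _))
  have hs3 : s ^ 3 ≤ s := by nlinarith [mul_pos hs_pos hs_pos]
  -- lower bound for a : -(1+ε')*s < a
  have hlo : -((1 + ε') * s) < a := by
    have hPt : 2 * (-((1+ε')*s)) ^ 3 - K * (-((1+ε')*s)) ^ 2 + 2 * (-((1+ε')*s)) + d < 0 := by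
      have e1 : 2 * (-((1+ε')*s)) ^ 3 - K * (-((1+ε')*s)) ^ 2 + 2 * (-((1+ε')*s)) + d
          = -(2*(1+ε')^3*s^3) - 2*(1+ε')*s - d*(ε'*(2+ε')) := by
        linear_combination (-(1+ε')^2) * hKs2
      rw [e1]
      have k1 : 0 < (1+ε')^3 * s^3 := mul_pos (by positivity) (by positivity)
      nlinarith [mul_pos hd hε'0, mul_nonneg (mul_nonneg hd.le hε'0.le) hε'0.le,
        mul_pos (show (0:ℝ) < 1+ε' by linarith) hs_pos]
    rw [hfac (-((1+ε')*s))] at hPt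
    have htb : -((1+ε')*s) - b < 0 := by
      nlinarith [mul_pos (show (0:ℝ) < 1+ε' by linarith) hs_pos]
    have htc : -((1+ε')*s) - c < 0 := by
      nlinarith [mul_pos (show (0:ℝ) < 1+ε' by linarith) hs_pos]
    by_contra hcon
    push_neg at hcon
    nlinarith [mul_pos (show (0:ℝ) < b - -((1+ε')*s) by linarith)
      (show (0:ℝ) < c - -((1+ε')*s) by linarith)]
  -- upper bound for a : a < -(1-ε')*s
  have hup : a < -((1 - ε') * s) := by
    have hPt : 0 < 2 * (-((1-ε')*s)) ^ 3 - K * (-((1-ε')*s)) ^ 2 + 2 * (-((1-ε')*s)) + d := by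
      have e1 : 2 * (-((1-ε')*s)) ^ 3 - K * (-((1-ε')*s)) ^ 2 + 2 * (-((1-ε')*s)) + d
          = -(2*(1-ε')^3*s^3) - 2*(1-ε')*s + d*(ε'*(2-ε')) := by
        linear_combination (-(1-ε')^2) * hKs2
      rw [e1]
      have k1 : (1-ε')^3 * s^3 ≤ 1 * s := by
        have h01 : (0:ℝ) ≤ 1 - ε' := by linarith
        have : (1-ε')^3 ≤ 1 := by
          nlinarith [mul_nonneg (mul_nonneg h01 h01) hε'0.le, mul_nonneg h01 hε'0.le]
        calc (1-ε')^3 * s^3 ≤ 1 * s^3 := mul_le_mul_of_nonneg_right this (by positivity)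
          _ ≤ 1 * s := by linarith
      nlinarith [mul_pos hd hε'0, mul_nonneg (mul_nonneg hd.le hε'0.le) hε'0.le,
        mul_le_mul_of_nonneg_right hε'1.le hs_pos.le, mul_pos hs_pos hε'0]
    rw [hfac (-((1-ε')*s))] at hPt
    have ht0 : 0 < (1-ε')*s := mul_pos (by linarith) hs_pos
    have htb : -((1-ε')*s) - b < 0 := by linarith
    have htc : -((1-ε')*s) - c < 0 := by linarith
    by_contra hcon
    push_neg at hcon
    nlinarith [mul_pos (show (0:ℝ) < b - -((1-ε')*s) by linarith)
      (show (0:ℝ) < c - -((1-ε')*s) by linarith)]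
  -- conclude
  have hq_pos : 0 < Real.sqrt (K / d) := Real.sqrt_pos.mpr (by positivity)
  have hinv : Real.sqrt (K / d) * s = 1 := by
    rw [hsdef, ← Real.sqrt_mul (by positivity)]
    rw [show K / d * (d / K) = 1 by field_simp]
    exact Real.sqrt_one
  rw [Real.dist_eq, abs_sub_lt_iff]
  constructor
  · nlinarith [mul_lt_mul_of_pos_right hup hq_pos]
  · nlinarith [mul_lt_mul_of_pos_right hlo hq_pos]

theorem aux_tendsto_f2 (d l : ℝ) (hd : 0 < d) (hl : 0 < l) (hl3 : l ^ 3 - l - d = 0)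
    (F : ℝ → ℝ × ℝ × ℝ)
    (hF : ∀ K : ℝ, 3 * l + 1 / l < K →
      -d / 2 < (F K).1 ∧ (F K).1 < 0 ∧ 0 < (F K).2.1 ∧ (F K).2.1 < l ∧
      l < (F K).2.2 ∧ (F K).2.2 < K / 2 ∧
      ∀ t : ℝ, 2 * t ^ 3 - K * t ^ 2 + 2 * t + d = 2 * (t - (F K).1) * (t - (F K).2.1) * (t - (F K).2.2)) :
    Tendsto (fun K : ℝ => (F K).2.1 * Real.sqrt (K / d)) atTop (nhds 1) := by
  rw [Metric.tendsto_nhds]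
  intro ε hε
  set ε' := min ε 1 / 2 with hε'def
  have hm0 : 0 < min ε 1 := lt_min hε one_pos
  have hε'0 : 0 < ε' := by positivity
  have hε'1 : ε' < 1 := by have : min ε 1 ≤ 1 := min_le_right _ _; rw [hε'def]; linarith
  have hε'ε : ε' < ε := by have h1 : min ε 1 ≤ ε := min_le_left _ _; rw [hε'def]; linarith
  have hs0 : Tendsto (fun K : ℝ => Real.sqrt (d / K)) atTop (nhds 0) := by
    have h1 : Tendsto (fun K : ℝ => d / K) atTop (nhds 0) :=
      tendsto_const_nhds.div_atTop tendsto_id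
    have h2 := (Real.continuous_sqrt.tendsto 0).comp h1
    simpa [Function.comp_def] using h2
  have ev1 : ∀ᶠ K in atTop,
      Real.sqrt (d / K) < min (d * ε' / 20) (min (l / 2) (min (d / 4) 1)) :=
    hs0.eventually (eventually_lt_nhds (by positivity))
  filter_upwards [ev1, eventually_gt_atTop (3 * l + 1 / l), eventually_gt_atTop 0]
    with K hsm hK hK0
  obtain ⟨h1, h2, h3, h4, h5, h6, hfac⟩ := hF K hK
  set a := (F K).1
  set b := (F K).2.1
  set c := (F K).2.2
  set s := Real.sqrt (d / K) with hsdef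
  have hs_pos : 0 < s := Real.sqrt_pos.mpr (by positivity)
  have hs2 : s ^ 2 = d / K := Real.sq_sqrt (by positivity)
  have hKs2 : K * s ^ 2 = d := by rw [hs2]; field_simp
  have hsm1 : s < d * ε' / 20 := lt_of_lt_of_le hsm (min_le_left _ _)
  have hsm2 : s < l / 2 := lt_of_lt_of_le hsm (le_trans (min_le_right _ _) (min_le_left _ _))
  have hsm4 : s < 1 := lt_of_lt_of_le hsm
    (le_trans (min_le_right _ _) (le_trans (min_le_right _ _) (min_le_right _ _)))
  have hs3 : s ^ 3 ≤ s := by nlinarith [mul_pos hs_pos hs_pos]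
  -- upper bound for b
  have hup : b < (1 + ε') * s := by
    have hPt : 2 * ((1+ε')*s) ^ 3 - K * ((1+ε')*s) ^ 2 + 2 * ((1+ε')*s) + d < 0 := by
      have e1 : 2 * ((1+ε')*s) ^ 3 - K * ((1+ε')*s) ^ 2 + 2 * ((1+ε')*s) + d
          = 2*(1+ε')^3*s^3 + 2*(1+ε')*s - d*(ε'*(2+ε')) := by
        linear_combination (-(1+ε')^2) * hKs2
      rw [e1]
      have k1 : (1+ε')^3 ≤ 8 := by
        calc (1+ε')^3 ≤ 2^3 := pow_le_pow_left₀ (by linarith) (by linarith) 3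
          _ = 8 := by norm_num
      have k2 : (1+ε')^3 * s^3 ≤ 8 * s := by
        calc (1+ε')^3 * s^3 ≤ 8 * s^3 :=
              mul_le_mul_of_nonneg_right k1 (by positivity)
          _ ≤ 8 * s := by linarith
      nlinarith [mul_pos hd hε'0, mul_nonneg (mul_nonneg hd.le hε'0.le) hε'0.le,
        mul_le_mul_of_nonneg_right hε'1.le hs_pos.le]
    rw [hfac ((1+ε')*s)] at hPt
    have hss : (1+ε')*s < l := by nlinarith
    have hta : 0 < (1+ε')*s - a := by nlinarith [mul_pos (show (0:ℝ) < 1+ε' by linarith) hs_pos]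
    have htc : 0 < c - (1+ε')*s := by linarith
    by_contra hcon
    push_neg at hcon
    nlinarith [mul_pos hta htc]
  -- lower bound for b
  have hlo : (1 - ε') * s < b := by
    have hPt : 0 < 2 * ((1-ε')*s) ^ 3 - K * ((1-ε')*s) ^ 2 + 2 * ((1-ε')*s) + d := by
      have e1 : 2 * ((1-ε')*s) ^ 3 - K * ((1-ε')*s) ^ 2 + 2 * ((1-ε')*s) + d
          = 2*(1-ε')^3*s^3 + 2*(1-ε')*s + d*(ε'*(2-ε')) := by
        linear_combination (-(1-ε')^2) * hKs2
      rw [e1]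
      have k1 : 0 ≤ (1-ε')^3 * s^3 := mul_nonneg (pow_nonneg (by linarith) 3) (by positivity)
      nlinarith [mul_pos hd hε'0, mul_pos hs_pos (show (0:ℝ) < 1 - ε' by linarith),
        pow_nonneg (show (0:ℝ) ≤ 1 - ε' by linarith) 3, pow_pos hs_pos 3]
    rw [hfac ((1-ε')*s)] at hPt
    have ht0 : 0 < (1-ε')*s := mul_pos (by linarith) hs_pos
    have hta : 0 < (1-ε')*s - a := by nlinarith [mul_pos hs_pos (show (0:ℝ) < 1 - ε' by linarith)]
    have htc : 0 < c - (1-ε')*s := by nlinarith [mul_pos hs_pos (show (0:ℝ) < 1 - ε' by linarith)]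
    by_contra hcon
    push_neg at hcon
    nlinarith [mul_pos hta htc]
  -- conclude
  have hq_pos : 0 < Real.sqrt (K / d) := Real.sqrt_pos.mpr (by positivity)
  have hinv : Real.sqrt (K / d) * s = 1 := by
    rw [hsdef, ← Real.sqrt_mul (by positivity)]
    rw [show K / d * (d / K) = 1 by field_simp]
    exact Real.sqrt_one
  rw [Real.dist_eq, abs_sub_lt_iff]
  constructor
  · nlinarith [mul_lt_mul_of_pos_right hup hq_pos]
  · nlinarith [mul_lt_mul_of_pos_right hlo hq_pos]

theorem aux_tendsto_f3 (d l : ℝ) (hd : 0 < d) (hl : 0 < l) (hl3 : l ^ 3 - l - d = 0)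
    (F : ℝ → ℝ × ℝ × ℝ)
    (hF : ∀ K : ℝ, 3 * l + 1 / l < K →
      -d / 2 < (F K).1 ∧ (F K).1 < 0 ∧ 0 < (F K).2.1 ∧ (F K).2.1 < l ∧
      l < (F K).2.2 ∧ (F K).2.2 < K / 2 ∧
      ∀ t : ℝ, 2 * t ^ 3 - K * t ^ 2 + 2 * t + d = 2 * (t - (F K).1) * (t - (F K).2.1) * (t - (F K).2.2)) :
    Tendsto (fun K : ℝ => K * ((F K).2.2 - K / 2)) atTop (nhds (-2)) := by
  rw [Metric.tendsto_nhds]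
  intro ε hε
  set ε' := min ε 1 / 2 with hε'def
  have hm0 : 0 < min ε 1 := lt_min hε one_pos
  have hε'0 : 0 < ε' := by positivity
  have hε'1 : ε' < 1 := by have : min ε 1 ≤ 1 := min_le_right _ _; rw [hε'def]; linarith
  have hε'ε : ε' < ε := by have h1 : min ε 1 ≤ ε := min_le_left _ _; rw [hε'def]; linarith
  filter_upwards [eventually_gt_atTop (3 * l + 1 / l), eventually_ge_atTop 1,
    eventually_gt_atTop (2 * l + 6), eventually_gt_atTop (56 / ε'),
    eventually_gt_atTop ((2 * d + 144) / ε')] with K hK hK1 hKl hK56 hKd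
  have hK0 : 0 < K := by linarith
  have hKe1 : 56 < K * ε' := by
    rw [div_lt_iff₀ hε'0] at hK56; linarith
  have hKe2 : 2 * d + 144 < K * ε' := by
    rw [div_lt_iff₀ hε'0] at hKd; linarith
  obtain ⟨h1, h2, h3, h4, h5, h6, hfac⟩ := hF K hK
  set a := (F K).1
  set b := (F K).2.1
  set c := (F K).2.2
  have hK3 : (1:ℝ) ≤ K ^ 3 := one_le_pow₀ hK1
  have hK3' : (0:ℝ) < K ^ 3 := by positivity
  -- upper bound : c < K/2 + (-2+ε')/K
  have hup : c < K / 2 + (-2 + ε') / K := by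
    set t := K / 2 + (-2 + ε') / K with htdef
    have htl : l < t := by
      have hd1 : (2 - ε') / K ≤ 2 := by
        rw [div_le_iff₀ hK0]; nlinarith
      have : t = K / 2 - (2 - ε') / K := by rw [htdef]; ring
      rw [this]; linarith
    have key : (2 * t ^ 3 - K * t ^ 2 + 2 * t + d) * K ^ 3
        = (ε' / 2 * K + d) * K ^ 3 + (2 * (-2+ε') ^ 2 + 2 * (-2+ε')) * K ^ 2
          + 2 * (-2+ε') ^ 3 := by
      rw [htdef]; field_simp; ring
    have hc2 : 0 ≤ 2 * (-2+ε') ^ 2 + 2 * (-2+ε') := by nlinarith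
    have hc3 : -16 < 2 * (-2+ε') ^ 3 := by nlinarith [sq_nonneg (ε' - 3)]
    have hrhs : 0 < (2 * t ^ 3 - K * t ^ 2 + 2 * t + d) * K ^ 3 := by
      rw [key]
      have e1 : 0 < (ε' / 2 * K + d) * K ^ 3 - 28 := by
        nlinarith [mul_pos hd hK3', mul_pos (show (0:ℝ) < K * ε' - 56 by linarith) hK3']
      nlinarith [mul_nonneg hc2 (sq_nonneg K), sq_nonneg K]
    have hPt : 0 < 2 * t ^ 3 - K * t ^ 2 + 2 * t + d := by
      by_contra hcon
      push_neg at hcon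
      nlinarith
    rw [hfac t] at hPt
    have hta : 0 < t - a := by linarith
    have htb : 0 < t - b := by linarith
    by_contra hcon
    push_neg at hcon
    nlinarith [mul_pos hta htb]
  -- lower bound : K/2 - (2+ε')/K < c
  have hlo : K / 2 - (2 + ε') / K < c := by
    set t := K / 2 - (2 + ε') / K with htdef
    have htl : l < t := by
      have hd1 : (2 + ε') / K ≤ 3 := by
        rw [div_le_iff₀ hK0]; nlinarith
      rw [htdef]; linarith
    have key : (2 * t ^ 3 - K * t ^ 2 + 2 * t + d) * K ^ 3
        = (-(ε' / 2) * K + d) * K ^ 3 + (2 * (-(2+ε')) ^ 2 + 2 * (-(2+ε'))) * K ^ 2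
          + 2 * (-(2+ε')) ^ 3 := by
      rw [htdef]; field_simp; ring
    have hc2 : 2 * (-(2+ε')) ^ 2 + 2 * (-(2+ε')) ≤ 14 := by nlinarith
    have hc3 : 2 * (-(2+ε')) ^ 3 < 0 := by nlinarith
    have hrhs : (2 * t ^ 3 - K * t ^ 2 + 2 * t + d) * K ^ 3 < 0 := by
      rw [key]
      have e0 : K ^ 2 ≤ K ^ 3 := by nlinarith [sq_nonneg K]
      have e1 : (-(ε' / 2) * K + d) * K ^ 3 + 14 * K ^ 2 < 0 := by
        have : -(ε' / 2) * K + d + 14 < -58 := by linarith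
        nlinarith [mul_pos hK0 hK0]
      nlinarith [mul_le_mul_of_nonneg_right hc2 (sq_nonneg K)]
    have hPt : 2 * t ^ 3 - K * t ^ 2 + 2 * t + d < 0 := by
      by_contra hcon
      push_neg at hcon
      nlinarith
    rw [hfac t] at hPt
    have hta : 0 < t - a := by linarith
    have htb : 0 < t - b := by linarith
    by_contra hcon
    push_neg at hcon
    nlinarith [mul_pos hta htb]
  -- conclude
  have e2 : K * (K / 2 + (-2 + ε') / K) = K ^ 2 / 2 + (-2 + ε') := by
    field_simp
  have e3 : K * (K / 2 - (2 + ε') / K) = K ^ 2 / 2 - (2 + ε') := by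
    field_simp
  rw [Real.dist_eq, abs_sub_lt_iff]
  constructor
  · nlinarith [mul_lt_mul_of_pos_left hup hK0]
  · nlinarith [mul_lt_mul_of_pos_left hlo hK0]

theorem stmt_8 (d l : ℝ) (hd : 0 < d) (hl : 0 < l) (hl3 : l ^ 3 - l - d = 0) :
    ∃ f₁ f₂ f₃ : ℝ → ℝ,
      (∀ K : ℝ, 3 * l + 1 / l < K →
        (∀ t : ℝ, 2 * t ^ 3 - K * t ^ 2 + 2 * t + d = 0 ↔
          (t = f₁ K ∨ t = f₂ K ∨ t = f₃ K)) ∧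
        f₁ K < f₂ K ∧ f₂ K < f₃ K ∧
        -d / 2 < f₁ K ∧ f₁ K < 0 ∧ 0 < f₂ K ∧ f₂ K < l ∧ l < f₃ K ∧ f₃ K < K / 2) ∧
      Tendsto (fun K : ℝ => f₁ K * Real.sqrt (K / d)) atTop (nhds (-1)) ∧
      Tendsto (fun K : ℝ => f₂ K * Real.sqrt (K / d)) atTop (nhds 1) ∧
      Tendsto (fun K : ℝ => K * (f₃ K - K / 2)) atTop (nhds (-2)) := by
  classical
  choose! F hF using fun K (hK : 3 * l + 1 / l < K) => cubic_roots d l K hd hl hl3 hK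
  refine ⟨fun K => (F K).1, fun K => (F K).2.1, fun K => (F K).2.2, ?_, ?_, ?_, ?_⟩
  · intro K hK
    obtain ⟨h1, h2, h3, h4, h5, h6, hfac⟩ := hF K hK
    refine ⟨fun t => ?_, by linarith, by linarith, h1, h2, h3, h4, h5, h6⟩
    rw [hfac t]
    constructor
    · intro h
      rcases mul_eq_zero.mp h with h | h
      · rcases mul_eq_zero.mp h with h | h
        · rcases mul_eq_zero.mp h with h | h
          · norm_num at h
          · exact Or.inl (sub_eq_zero.mp h)
        · exact Or.inr (Or.inl (sub_eq_zero.mp h))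
      · exact Or.inr (Or.inr (sub_eq_zero.mp h))
    · rintro (rfl | rfl | rfl) <;> ring
  · exact aux_tendsto_f1 d l hd hl hl3 F hF
  · exact aux_tendsto_f2 d l hd hl hl3 F hF
  · exact aux_tendsto_f3 d l hd hl hl3 F hF
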